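/- Let g be a restricted Lie algebra over a field k of characteristic p > 2, M an abelian restricted Lie algebra with restricted g-operation, E a restricted Lie algebra extension of M by g with quotient map φ, and γ : E → E' a Lie algebra isomorphism onto another restricted extension fixing M pointwise with φ'∘γ = φ. Then for e ∈ E, the element γ(e^[p]) − (γ(e))^[p] depends only on φ(e). -/

import Mathlib

open TensorProduct

/-- The linear map extracting the `n`-th coefficient of an element of `k[λ] ⊗ g`. -/
noncomputable def jacobsonCoeff (k : Type*) [CommRing k] (g : Type*) [AddCommGroup g]
    [Module k g] (n : ℕ) : (Polynomial k ⊗[k] g) →ₗ[k] g :=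
  (TensorProduct.lid k g).toLinearMap.comp (LinearMap.rTensor g (Polynomial.lcoeff k n))

/-- `jacobsonS k p g x y i` is the element `sᵢ(x,y)` of `g` determined by the requirement
that `i·sᵢ(x,y)` is the coefficient of `λ^{i-1}` in `(ad(λx+y))^{p-1}(x)`, computed in the
base change `k[λ] ⊗ g`. -/
noncomputable def jacobsonS (k : Type*) [Field k] (p : ℕ) (g : Type*) [LieRing g]
    [LieAlgebra k g] (x y : g) (i : ℕ) : g :=
  ((i : k)⁻¹) • jacobsonCoeff k g (i - 1)
    (((LieAlgebra.ad (Polynomial k) (Polynomial k ⊗[k] g)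
        (Polynomial.X ⊗ₜ[k] x + 1 ⊗ₜ[k] y)) ^ (p - 1)) (1 ⊗ₜ[k] x))

/-- `P` is a `p`-operation on the Lie algebra `g` over `k`:
`(c•x)^[p] = c^p • x^[p]`, `ad(x^[p]) = (ad x)^p`, and the Jacobson formula
`(x+y)^[p] = x^[p] + y^[p] + ∑_{i=1}^{p-1} sᵢ(x,y)`. -/
def IsPOperation (k : Type*) [Field k] (p : ℕ) (g : Type*) [LieRing g] [LieAlgebra k g]
    (P : g → g) : Prop :=
  (∀ (c : k) (x : g), P (c • x) = c ^ p • P x) ∧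
  (∀ x y : g, ⁅P x, y⁆ = ((LieAlgebra.ad k g x) ^ p) y) ∧
  (∀ x y : g, P (x + y) = P x + P y + ∑ i ∈ Finset.Icc 1 (p - 1), jacobsonS k p g x y i)

section Aux

variable (k : Type*) [Field k] (p : ℕ) (g : Type*) [LieRing g] [LieAlgebra k g]

lemma jacobsonS_eq (x y : g) (h : ∀ j : ℕ, ⁅x, ((LieAlgebra.ad k g y) ^ j) x⁆ = 0) (i : ℕ) :
    jacobsonS k p g x y i =
      if i = 1 then ((LieAlgebra.ad k g y) ^ (p - 1)) x else 0 := by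
  have key : ∀ n : ℕ, ((LieAlgebra.ad (Polynomial k) (Polynomial k ⊗[k] g)
      (Polynomial.X ⊗ₜ[k] x + 1 ⊗ₜ[k] y)) ^ n) (1 ⊗ₜ[k] x)
      = 1 ⊗ₜ[k] (((LieAlgebra.ad k g y) ^ n) x) := by
    intro n
    induction n with
    | zero => simp
    | succ n ih =>
      rw [pow_succ', Module.End.mul_apply, ih, pow_succ', Module.End.mul_apply,
        LieAlgebra.ad_apply, LieAlgebra.ad_apply, add_lie,
        LieAlgebra.ExtendScalars.bracket_tmul, LieAlgebra.ExtendScalars.bracket_tmul,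
        h n, one_mul, TensorProduct.tmul_zero, zero_add]
  rw [jacobsonS, key, jacobsonCoeff]
  simp only [LinearMap.comp_apply, LinearMap.rTensor_tmul, Polynomial.lcoeff_apply,
    LinearEquiv.coe_toLinearMap, TensorProduct.lid_tmul, Polynomial.coeff_one]
  rcases eq_or_ne i 0 with hi | hi
  · subst hi; simp
  rcases eq_or_ne i 1 with hi1 | hi1
  · subst hi1; simp
  · have h2 : i - 1 ≠ 0 := by omega
    simp [h2, hi1]

end Aux

/-- Let `(E,φ)` and `(E',φ')` be restricted extensions of the abelian restricted Lie
algebra `M` by the restricted Lie algebra `g`, and `γ : E → E'` a (not necessarily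
restricted) Lie algebra isomorphism fixing `M` pointwise with `φ'∘γ = φ`.  Then for
`e ∈ E` the element `γ(e^[p]) - (γ(e))^[p]` depends only on `φ(e)`. -/
theorem stmt13 (k : Type*) [Field k] (p : ℕ) [Fact p.Prime] (hp : 2 < p) [CharP k p]
    (g : Type*) [LieRing g] [LieAlgebra k g] (P : g → g) (hP : IsPOperation k p g P)
    (E : Type*) [LieRing E] [LieAlgebra k E] (PE : E → E) (hPE : IsPOperation k p E PE)
    (E' : Type*) [LieRing E'] [LieAlgebra k E'] (PE' : E' → E') (hPE' : IsPOperation k p E' PE')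
    -- `M` is an abelian restricted Lie algebra with `p`-map `PM`
    (M : Type*) [AddCommGroup M] [Module k M] (PM : M → M)
    -- `M` embeds as the kernel of `φ : E → g`; the embedded copy is an abelian
    -- restricted ideal
    (ι : M →ₗ[k] E) (hinj : Function.Injective ι)
    (φ : E →ₗ⁅k⁆ g) (hsurj : Function.Surjective φ)
    (hker : ∀ e : E, φ e = 0 ↔ e ∈ Set.range ι)
    (habel : ∀ m m' : M, ⁅ι m, ι m'⁆ = 0)
    (hideal : ∀ (e : E) (m : M), ⁅e, ι m⁆ ∈ Set.range ι)
    (hres : ∀ m : M, PE (ι m) = ι (PM m))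
    (hPφ : ∀ e : E, φ (PE e) = P (φ e))
    -- and likewise in `E'`
    (ι' : M →ₗ[k] E') (hinj' : Function.Injective ι')
    (φ' : E' →ₗ⁅k⁆ g) (hsurj' : Function.Surjective φ')
    (hker' : ∀ e : E', φ' e = 0 ↔ e ∈ Set.range ι')
    (habel' : ∀ m m' : M, ⁅ι' m, ι' m'⁆ = 0)
    (hideal' : ∀ (e : E') (m : M), ⁅e, ι' m⁆ ∈ Set.range ι')
    (hres' : ∀ m : M, PE' (ι' m) = ι' (PM m))
    (hPφ' : ∀ e : E', φ' (PE' e) = P (φ' e))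
    -- `γ` is a similarity isomorphism
    (γ : E →ₗ⁅k⁆ E') (hbij : Function.Bijective γ)
    (hfix : ∀ m : M, γ (ι m) = ι' m) (hcom : ∀ e : E, φ' (γ e) = φ e) :
    ∀ e₁ e₂ : E, φ e₁ = φ e₂ →
      γ (PE e₁) - PE' (γ e₁) = γ (PE e₂) - PE' (γ e₂) := by
  intro e₁ e₂ hφ
  have h0 : φ (e₂ - e₁) = 0 := by rw [map_sub, hφ, sub_self]
  obtain ⟨m, hm⟩ := (hker _).mp h0
  have he₂ : e₂ = ι m + e₁ := by rw [hm]; abel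
  -- (ad e₁)^j (ι m) stays in M
  have hrange : ∀ j : ℕ, ((LieAlgebra.ad k E e₁) ^ j) (ι m) ∈ Set.range ι := by
    intro j
    induction j with
    | zero => exact ⟨m, by simp⟩
    | succ j ih =>
      obtain ⟨m', hm'⟩ := ih
      rw [pow_succ', Module.End.mul_apply, LieAlgebra.ad_apply, ← hm']
      exact hideal e₁ m'
  have hE : ∀ j : ℕ, ⁅ι m, ((LieAlgebra.ad k E e₁) ^ j) (ι m)⁆ = 0 := by
    intro j
    obtain ⟨m', hm'⟩ := hrange j
    rw [← hm']
    exact habel m m'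
  have hγad : ∀ j : ℕ, ((LieAlgebra.ad k E' (γ e₁)) ^ j) (ι' m)
      = γ (((LieAlgebra.ad k E e₁) ^ j) (ι m)) := by
    intro j
    induction j with
    | zero => simp [hfix m]
    | succ j ih =>
      rw [pow_succ', Module.End.mul_apply, LieAlgebra.ad_apply, ih,
        pow_succ', Module.End.mul_apply, LieAlgebra.ad_apply, LieHom.map_lie]
  have hE' : ∀ j : ℕ, ⁅ι' m, ((LieAlgebra.ad k E' (γ e₁)) ^ j) (ι' m)⁆ = 0 := by
    intro j
    obtain ⟨m', hm'⟩ := hrange j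
    rw [hγad j, ← hm', hfix m']
    exact habel' m m'
  have hmem : (1 : ℕ) ∈ Finset.Icc 1 (p - 1) := by
    simp only [Finset.mem_Icc]
    omega
  have hsumE : ∑ i ∈ Finset.Icc 1 (p - 1), jacobsonS k p E (ι m) e₁ i
      = ((LieAlgebra.ad k E e₁) ^ (p - 1)) (ι m) := by
    rw [Finset.sum_congr rfl (fun i _ => jacobsonS_eq k p E (ι m) e₁ hE i),
      Finset.sum_ite_eq' (Finset.Icc 1 (p - 1)) 1
        (fun _ => ((LieAlgebra.ad k E e₁) ^ (p - 1)) (ι m)), if_pos hmem]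
  have hsumE' : ∑ i ∈ Finset.Icc 1 (p - 1), jacobsonS k p E' (ι' m) (γ e₁) i
      = ((LieAlgebra.ad k E' (γ e₁)) ^ (p - 1)) (ι' m) := by
    rw [Finset.sum_congr rfl (fun i _ => jacobsonS_eq k p E' (ι' m) (γ e₁) hE' i),
      Finset.sum_ite_eq' (Finset.Icc 1 (p - 1)) 1
        (fun _ => ((LieAlgebra.ad k E' (γ e₁)) ^ (p - 1)) (ι' m)), if_pos hmem]
  have hPE2 : PE e₂ = ι (PM m) + PE e₁ + ((LieAlgebra.ad k E e₁) ^ (p - 1)) (ι m) := by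
    rw [he₂, hPE.2.2, hres, hsumE]
  have hγe₂ : γ e₂ = ι' m + γ e₁ := by rw [he₂, map_add, hfix]
  have hPE2' : PE' (γ e₂) = ι' (PM m) + PE' (γ e₁)
      + γ (((LieAlgebra.ad k E e₁) ^ (p - 1)) (ι m)) := by
    rw [hγe₂, hPE'.2.2, hres', hsumE', hγad]
  rw [hPE2, hPE2', map_add, map_add, hfix]
  abel
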